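/- Transition (cocycle) formula for the path-integral value: for the canonical Markov chain on a connected weighted graph, any edge flow f, and any three states S, T, U, one has V_f^U(T) − V_f^U(S) = V_f^S(T). -/

import Mathlib

set_option linter.unusedSectionVars false
set_option linter.unusedVariables false


open Finset

variable {Ξ : Type*}

/-- Transition probability of the canonical Markov chain associated to the
edge weight `lam`: `p(S,T) = λ(S,T) / Σ_U λ(S,U)`. -/
noncomputable def transProb [Fintype Ξ] (lam : Ξ → Ξ → ℝ) (S T : Ξ) : ℝ :=
  lam S T / ∑ U : Ξ, lam S U

/-- Probability of a finite path `x : Fin (n+1) → Ξ` under the canonical chain. -/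
noncomputable def pathProb [Fintype Ξ] (lam : Ξ → Ξ → ℝ) {n : ℕ}
    (x : Fin (n + 1) → Ξ) : ℝ :=
  ∏ k : Fin n, transProb lam (x k.castSucc) (x k.succ)

/-- The path integral of an edge flow `f` along a finite path. -/
def pathSum (f : Ξ → Ξ → ℝ) {n : ℕ} (x : Fin (n + 1) → Ξ) : ℝ :=
  ∑ k : Fin n, f (x k.castSucc) (x k.succ)

/-- A path of length `n` from `S` which hits `T` for the first time at time `n`. -/
def FirstHit [DecidableEq Ξ] (S T : Ξ) {n : ℕ} (x : Fin (n + 1) → Ξ) : Prop :=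
  x 0 = S ∧ x (Fin.last n) = T ∧ ∀ k : Fin n, x k.castSucc ≠ T

instance [DecidableEq Ξ] (S T : Ξ) (n : ℕ) :
    DecidablePred (FirstHit S T (n := n)) := fun _ => by
  unfold FirstHit; infer_instance

/-- The value `V_f^S(T)`: the expected path integral of the edge flow `f` along
the canonical Markov chain started at `S`, up to the first hitting time of `T`,
written as a sum over all finite paths first hitting `T` weighted by their
probabilities. -/
noncomputable def pathValue [Fintype Ξ] [DecidableEq Ξ]
    (lam : Ξ → Ξ → ℝ) (f : Ξ → Ξ → ℝ) (S T : Ξ) : ℝ :=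
  ∑' n : ℕ, ∑ x ∈ Finset.univ.filter (FirstHit S T (n := n)),
      pathProb lam x * pathSum f x

section Aux
variable [Fintype Ξ] [DecidableEq Ξ] (lam : Ξ → Ξ → ℝ) (f : Ξ → Ξ → ℝ) (T : Ξ)

noncomputable def hitP (n : ℕ) (S : Ξ) : ℝ :=
  ∑ x ∈ univ.filter (FirstHit S T (n := n)), pathProb lam x

noncomputable def valP (n : ℕ) (S : Ξ) : ℝ :=
  ∑ x ∈ univ.filter (FirstHit S T (n := n)), pathProb lam x * pathSum f x

noncomputable def survP (n : ℕ) (S : Ξ) : ℝ :=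
  ∑ x : Fin (n + 1) → Ξ, if x 0 = S ∧ ∀ m, x m ≠ T then pathProb lam x else 0

lemma pathProb_cons {n : ℕ} (a : Ξ) (y : Fin (n + 1) → Ξ) :
    pathProb lam (Fin.cons a y) = transProb lam a (y 0) * pathProb lam y := by
  unfold pathProb
  rw [Fin.prod_univ_succ]
  refine congrArg₂ _ (by simp) (Finset.prod_congr rfl fun j _ => ?_)
  rw [← Fin.succ_castSucc]
  simp [Fin.cons_succ]

lemma pathSum_cons (a : Ξ) {n : ℕ} (y : Fin (n + 1) → Ξ) :
    pathSum f (Fin.cons a y) = f a (y 0) + pathSum f y := by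
  unfold pathSum
  rw [Fin.sum_univ_succ]
  refine congrArg₂ _ (by simp) (Finset.sum_congr rfl fun j _ => ?_)
  rw [← Fin.succ_castSucc]
  simp [Fin.cons_succ]

lemma firstHit_cons (S : Ξ) {n : ℕ} (a : Ξ) (y : Fin (n + 1) → Ξ) :
    FirstHit S T (Fin.cons a y) ↔ a = S ∧ a ≠ T ∧ FirstHit (y 0) T y := by
  unfold FirstHit
  rw [Fin.forall_fin_succ]
  constructor
  · rintro ⟨h0, hl, hc0, hcs⟩
    refine ⟨by simpa using h0, by simpa using hc0, rfl, by simpa [← Fin.succ_last] using hl, fun k => ?_⟩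
    have := hcs k
    rwa [← Fin.succ_castSucc, Fin.cons_succ] at this
  · rintro ⟨h0, hne, -, hl, hc⟩
    refine ⟨by simpa using h0, by simpa [← Fin.succ_last] using hl, by simpa using hne, fun k => ?_⟩
    rw [← Fin.succ_castSucc, Fin.cons_succ]
    exact hc k

/-- decompose a sum over (n+2)-step paths via first coordinate -/
lemma sum_paths_cons {n : ℕ} (G : (Fin (n + 2) → Ξ) → ℝ) :
    ∑ x : Fin (n + 2) → Ξ, G x = ∑ a : Ξ, ∑ y : Fin (n + 1) → Ξ, G (Fin.cons a y) := by
  have h1 : ∑ p : Ξ × (Fin (n + 1) → Ξ), G (Fin.cons p.1 p.2) = ∑ x : Fin (n + 2) → Ξ, G x :=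
    Fintype.sum_equiv (Fin.consEquiv (fun _ => Ξ)) _ _ (fun p => rfl)
  rw [← h1, Fintype.sum_prod_type]

/-- partition a sum over paths according to the starting point -/
lemma sum_paths_fiber {n : ℕ} (G : (Fin (n + 1) → Ξ) → ℝ) :
    ∑ y : Fin (n + 1) → Ξ, G y = ∑ b : Ξ, ∑ y : Fin (n + 1) → Ξ, if y 0 = b then G y else 0 := by
  rw [Finset.sum_comm]
  refine Finset.sum_congr rfl fun y _ => ?_
  simp


lemma hitP_zero (S : Ξ) : hitP lam T 0 S = if S = T then 1 else 0 := by
  unfold hitP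
  rw [Finset.sum_filter]
  have h1 : ∑ x : Fin 1 → Ξ, (if FirstHit S T x then pathProb lam x else 0)
      = ∑ a : Ξ, if ((fun _ => a : Fin 1 → Ξ) 0 = S ∧ (fun _ => a : Fin 1 → Ξ) (Fin.last 0) = T
          ∧ ∀ k : Fin 0, (fun _ => a : Fin 1 → Ξ) k.castSucc ≠ T)
        then pathProb lam (fun _ => a : Fin 1 → Ξ) else 0 := by
    refine (Fintype.sum_equiv (Equiv.funUnique (Fin 1) Ξ).symm _ _ (fun x => ?_)).symm
    simp [FirstHit, Equiv.funUnique, Unique.eq_default]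
    congr
  rw [h1]
  have h2 : ∀ a : Ξ, (if ((fun _ => a : Fin 1 → Ξ) 0 = S ∧ (fun _ => a : Fin 1 → Ξ) (Fin.last 0) = T
          ∧ ∀ k : Fin 0, (fun _ => a : Fin 1 → Ξ) k.castSucc ≠ T)
        then pathProb lam (fun _ => a : Fin 1 → Ξ) else 0)
      = if a = S ∧ a = T then 1 else 0 := by
    intro a
    have hp : pathProb lam (fun _ => a : Fin 1 → Ξ) = 1 := by simp [pathProb]
    by_cases h : a = S ∧ a = T
    · obtain ⟨rfl, rfl⟩ := h
      simp [hp]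
    · rcases not_and_or.mp h with h' | h' <;> simp [h']
  simp only [h2]
  by_cases hST : S = T
  · subst hST
    simp
  · rw [if_neg hST]
    refine Finset.sum_eq_zero fun a _ => ?_
    rw [if_neg]
    rintro ⟨rfl, rfl⟩
    exact hST rfl

lemma valP_zero (S : Ξ) : valP lam f T 0 S = 0 := by
  unfold valP
  refine Finset.sum_eq_zero fun x _ => ?_
  simp [pathSum]

lemma hitP_succ_self (n : ℕ) : hitP lam T (n + 1) T = 0 := by
  unfold hitP
  refine Finset.sum_eq_zero fun x hx => ?_
  rw [Finset.mem_filter] at hx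
  obtain ⟨-, h0, -, hc⟩ := hx
  exact absurd (by simpa using h0) (by simpa using hc 0)

lemma valP_succ_self (n : ℕ) : valP lam f T (n + 1) T = 0 := by
  unfold valP
  refine Finset.sum_eq_zero fun x hx => ?_
  rw [Finset.mem_filter] at hx
  obtain ⟨-, h0, -, hc⟩ := hx
  exact absurd (by simpa using h0) (by simpa using hc 0)

lemma valP_self (n : ℕ) : valP lam f T n T = 0 := by
  cases n with
  | zero => exact valP_zero lam f T T
  | succ n => exact valP_succ_self lam f T n

/-- the common inner-step computation -/
lemma inner_step (S : Ξ) (n : ℕ) :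
    (∑ y : Fin (n + 1) → Ξ, if FirstHit (y 0) T y then
        (transProb lam S (y 0) * pathProb lam y) * (f S (y 0) + pathSum f y) else 0)
      = ∑ a : Ξ, transProb lam S a * (f S a * hitP lam T n a + valP lam f T n a) := by
  rw [sum_paths_fiber]
  refine Finset.sum_congr rfl fun b _ => ?_
  have h1 : ∀ y : Fin (n + 1) → Ξ,
      (if y 0 = b then (if FirstHit (y 0) T y then
        (transProb lam S (y 0) * pathProb lam y) * (f S (y 0) + pathSum f y) else 0) else 0)
      = if FirstHit b T y then (transProb lam S b * pathProb lam y) * (f S b + pathSum f y) else 0 := by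
    intro y
    by_cases h0 : y 0 = b
    · subst h0; simp
    · have : ¬ FirstHit b T y := fun h => h0 h.1
      simp [h0, this]
  simp only [h1]
  rw [← Finset.sum_filter]
  unfold hitP valP
  simp only [mul_add, Finset.mul_sum, Finset.sum_add_distrib]
  refine congrArg₂ (· + ·) ?_ ?_ <;> exact Finset.sum_congr rfl fun y _ => by ring

lemma hitP_succ {S : Ξ} (hST : S ≠ T) (n : ℕ) :
    hitP lam T (n + 1) S = ∑ a : Ξ, transProb lam S a * hitP lam T n a := by
  unfold hitP
  rw [Finset.sum_filter, sum_paths_cons]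
  have h1 : ∀ a (y : Fin (n+1) → Ξ),
      (if FirstHit S T (Fin.cons a y) then pathProb lam (Fin.cons a y) else 0)
      = if a = S then (if FirstHit (y 0) T y then transProb lam a (y 0) * pathProb lam y else 0) else 0 := by
    intro a y
    by_cases haS : a = S
    · subst haS
      by_cases hFH : FirstHit (y 0) T y
      · simp [firstHit_cons, hST, hFH, pathProb_cons]
      · simp [firstHit_cons, hFH]
    · simp [firstHit_cons, haS]
  simp only [h1]
  rw [Finset.sum_comm]
  have h2 : ∀ y : Fin (n+1) → Ξ, (∑ a : Ξ, if a = S then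
      (if FirstHit (y 0) T y then transProb lam a (y 0) * pathProb lam y else 0) else 0)
      = if FirstHit (y 0) T y then transProb lam S (y 0) * pathProb lam y else 0 := by
    intro y
    rw [Finset.sum_ite_eq' univ S]
    simp
  simp only [h2]
  -- now fiber over y 0
  rw [sum_paths_fiber]
  refine Finset.sum_congr rfl fun b _ => ?_
  have h3 : ∀ y : Fin (n + 1) → Ξ,
      (if y 0 = b then (if FirstHit (y 0) T y then transProb lam S (y 0) * pathProb lam y else 0) else 0)
      = if FirstHit b T y then transProb lam S b * pathProb lam y else 0 := by
    intro y
    by_cases h0 : y 0 = b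
    · subst h0; simp
    · have : ¬ FirstHit b T y := fun h => h0 h.1
      simp [h0, this]
  simp only [h3]
  rw [← Finset.sum_filter]
  show _ = transProb lam S b * ∑ x ∈ univ.filter (FirstHit b T (n := n)), pathProb lam x
  rw [Finset.mul_sum]


lemma valP_succ {S : Ξ} (hST : S ≠ T) (n : ℕ) :
    valP lam f T (n + 1) S
      = ∑ a : Ξ, transProb lam S a * (f S a * hitP lam T n a + valP lam f T n a) := by
  unfold valP
  rw [Finset.sum_filter, sum_paths_cons]
  have h1 : ∀ a (y : Fin (n+1) → Ξ),
      (if FirstHit S T (Fin.cons a y) then pathProb lam (Fin.cons a y) * pathSum f (Fin.cons a y) else 0)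
      = if a = S then (if FirstHit (y 0) T y then
          (transProb lam S (y 0) * pathProb lam y) * (f S (y 0) + pathSum f y) else 0) else 0 := by
    intro a y
    by_cases haS : a = S
    · subst haS
      by_cases hFH : FirstHit (y 0) T y
      · simp [firstHit_cons, hST, hFH, pathProb_cons, pathSum_cons]
      · simp [firstHit_cons, hFH]
    · simp [firstHit_cons, haS]
  simp only [h1]
  rw [Finset.sum_comm]
  have h2 : ∀ y : Fin (n+1) → Ξ, (∑ a : Ξ, if a = S then
      (if FirstHit (y 0) T y then (transProb lam S (y 0) * pathProb lam y) * (f S (y 0) + pathSum f y) else 0) else 0)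
      = if FirstHit (y 0) T y then (transProb lam S (y 0) * pathProb lam y) * (f S (y 0) + pathSum f y) else 0 := by
    intro y
    rw [Finset.sum_ite_eq' univ S]
    simp
  simp only [h2]
  exact inner_step lam f T S n

lemma transProb_nonneg (hnonneg : ∀ a b, 0 ≤ lam a b) (a b : Ξ) :
    0 ≤ transProb lam a b :=
  div_nonneg (hnonneg a b) (Finset.sum_nonneg fun c _ => hnonneg a c)

lemma pathProb_nonneg (hnonneg : ∀ a b, 0 ≤ lam a b) {n : ℕ} (x : Fin (n + 1) → Ξ) :
    0 ≤ pathProb lam x :=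
  Finset.prod_nonneg fun k _ => transProb_nonneg lam hnonneg _ _

lemma transProb_sum_one (a : Ξ) (hD : 0 < ∑ b, lam a b) :
    ∑ b, transProb lam a b = 1 := by
  unfold transProb
  rw [← Finset.sum_div, div_self hD.ne']

lemma hitP_nonneg (hnonneg : ∀ a b, 0 ≤ lam a b) (n : ℕ) (S : Ξ) :
    0 ≤ hitP lam T n S :=
  Finset.sum_nonneg fun x _ => pathProb_nonneg lam hnonneg x

lemma survP_nonneg (hnonneg : ∀ a b, 0 ≤ lam a b) (n : ℕ) (S : Ξ) :
    0 ≤ survP lam T n S := by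
  refine Finset.sum_nonneg fun x _ => ?_
  split
  · exact pathProb_nonneg lam hnonneg x
  · exact le_refl 0

lemma survP_self (n : ℕ) : survP lam T n T = 0 := by
  refine Finset.sum_eq_zero fun x _ => ?_
  rw [if_neg]
  rintro ⟨h0, hm⟩
  exact hm 0 h0

lemma survP_zero {S : Ξ} (hST : S ≠ T) : survP lam T 0 S = 1 := by
  unfold survP
  have h1 : ∑ x : Fin 1 → Ξ, (if x 0 = S ∧ ∀ m : Fin 1, x m ≠ T then pathProb lam x else 0)
      = ∑ a : Ξ, if a = S ∧ a ≠ T then (1:ℝ) else 0 := by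
    apply Fintype.sum_equiv (Equiv.funUnique (Fin 1) Ξ)
    intro x
    have hp : pathProb lam x = 1 := by simp [pathProb]
    have he : (Equiv.funUnique (Fin 1) Ξ) x = x 0 := rfl
    have hm : (∀ m : Fin 1, x m ≠ T) ↔ x 0 ≠ T :=
      ⟨fun h => h 0, fun h m => by rwa [Subsingleton.elim m 0]⟩
    rw [he]
    by_cases h : x 0 = S ∧ x 0 ≠ T
    · rw [if_pos ⟨h.1, hm.mpr h.2⟩, if_pos h, hp]
    · rw [if_neg (fun hc => h ⟨hc.1, hm.mp hc.2⟩), if_neg h]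
  rw [h1]
  rw [Finset.sum_eq_single S]
  · simp [hST]
  · intro b _ hb; simp [hb]
  · intro h; exact absurd (Finset.mem_univ S) h

lemma survP_succ {S : Ξ} (hST : S ≠ T) (n : ℕ) :
    survP lam T (n + 1) S = ∑ a : Ξ, transProb lam S a * survP lam T n a := by
  classical
  unfold survP
  rw [sum_paths_cons]
  have h1 : ∀ (a : Ξ) (y : Fin (n + 1) → Ξ),
      (if (Fin.cons a y : Fin (n+2) → Ξ) 0 = S ∧ ∀ m : Fin (n+2), (Fin.cons a y : Fin (n+2) → Ξ) m ≠ T then pathProb lam (Fin.cons a y) else 0)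
      = if a = S then (if ∀ j : Fin (n + 1), y j ≠ T then transProb lam S (y 0) * pathProb lam y else 0) else 0 := by
    intro a y
    have hcond : ((Fin.cons a y : Fin (n+2) → Ξ) 0 = S ∧ ∀ m : Fin (n+2), (Fin.cons a y : Fin (n+2) → Ξ) m ≠ T)
        ↔ (a = S ∧ (a ≠ T ∧ ∀ j : Fin (n + 1), y j ≠ T)) := by
      rw [Fin.forall_fin_succ]
      simp [Fin.cons_succ]
    by_cases h : (Fin.cons a y : Fin (n+2) → Ξ) 0 = S ∧ ∀ m : Fin (n+2), (Fin.cons a y : Fin (n+2) → Ξ) m ≠ T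
    · obtain ⟨haS, hT, hy⟩ := hcond.mp h
      subst haS
      rw [if_pos h, if_pos rfl, if_pos hy, pathProb_cons]
    · rw [if_neg h]
      by_cases haS : a = S
      · subst haS
        by_cases hy : ∀ j : Fin (n + 1), y j ≠ T
        · exact absurd (hcond.mpr ⟨rfl, hST, hy⟩) h
        · rw [if_pos rfl, if_neg hy]
      · rw [if_neg haS]
  simp only [h1]
  have h2 : ∀ y : Fin (n + 1) → Ξ, (∑ a : Ξ, if a = S then
      (if ∀ j : Fin (n + 1), y j ≠ T then transProb lam S (y 0) * pathProb lam y else 0) else 0)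
      = if ∀ j : Fin (n + 1), y j ≠ T then transProb lam S (y 0) * pathProb lam y else 0 := by
    intro y
    rw [Finset.sum_ite_eq' univ S]
    simp
  rw [Finset.sum_comm]
  simp only [h2]
  rw [sum_paths_fiber]
  refine Finset.sum_congr rfl fun b _ => ?_
  have h3 : ∀ y : Fin (n + 1) → Ξ,
      (if y 0 = b then (if ∀ j : Fin (n + 1), y j ≠ T then transProb lam S (y 0) * pathProb lam y else 0) else 0)
      = transProb lam S b * (if y 0 = b ∧ ∀ m : Fin (n+1), y m ≠ T then pathProb lam y else 0) := by
    intro y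
    by_cases h0 : y 0 = b
    · subst h0
      by_cases hy : ∀ j : Fin (n + 1), y j ≠ T
      · simp [hy]
      · simp [hy]
    · simp [h0]
  simp only [h3]
  rw [← Finset.mul_sum]

section Decay
variable (hnonneg : ∀ a b, 0 ≤ lam a b) (hD : ∀ a : Ξ, 0 < ∑ b, lam a b)
include hnonneg hD

lemma hit_surv_total : ∀ n (S : Ξ),
    (∑ m ∈ Finset.range (n + 1), hitP lam T m S) + survP lam T n S = 1 := by
  intro n
  induction n with
  | zero =>
    intro S
    rw [Finset.sum_range_one, hitP_zero]
    by_cases hST : S = T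
    · subst hST; rw [if_pos rfl, survP_self]; ring
    · rw [if_neg hST, survP_zero lam T hST]; ring
  | succ n ih =>
    intro S
    by_cases hST : S = T
    · subst hST
      rw [survP_self, Finset.sum_range_succ', hitP_zero, if_pos rfl]
      simp [hitP_succ_self]
    · rw [Finset.sum_range_succ', hitP_zero, if_neg hST, survP_succ lam T hST]
      have h1 : ∀ k, k ∈ Finset.range (n + 1) → hitP lam T (k + 1) S
          = ∑ a : Ξ, transProb lam S a * hitP lam T k a := fun k _ => hitP_succ lam T hST k
      rw [Finset.sum_congr rfl h1, Finset.sum_comm, add_zero, ← Finset.sum_add_distrib]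
      have h2 : ∀ a : Ξ, (∑ k ∈ Finset.range (n + 1), transProb lam S a * hitP lam T k a)
          + transProb lam S a * survP lam T n a
          = transProb lam S a := by
        intro a
        rw [← Finset.mul_sum, ← mul_add, ih a, mul_one]
      rw [Finset.sum_congr rfl fun a _ => h2 a]
      exact transProb_sum_one lam S (hD S)

lemma survP_le_one (n : ℕ) (S : Ξ) : survP lam T n S ≤ 1 := by
  have := hit_surv_total lam T hnonneg hD n S
  nlinarith [Finset.sum_nonneg (fun m (_ : m ∈ Finset.range (n+1)) => hitP_nonneg lam T hnonneg m S)]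

lemma survP_mono : ∀ n (S : Ξ), survP lam T (n + 1) S ≤ survP lam T n S := by
  intro n
  induction n with
  | zero =>
    intro S
    by_cases hST : S = T
    · subst hST; rw [survP_self, survP_self]
    · rw [survP_succ lam T hST, survP_zero lam T hST]
      calc ∑ a : Ξ, transProb lam S a * survP lam T 0 a
          ≤ ∑ a : Ξ, transProb lam S a := by
            refine Finset.sum_le_sum fun a _ => ?_
            nlinarith [transProb_nonneg lam hnonneg S a, survP_le_one lam T hnonneg hD 0 a,
              survP_nonneg lam T hnonneg 0 a]
        _ = 1 := transProb_sum_one lam S (hD S)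
  | succ n ih =>
    intro S
    by_cases hST : S = T
    · subst hST; rw [survP_self, survP_self]
    · rw [survP_succ lam T hST, survP_succ lam T hST]
      exact Finset.sum_le_sum fun a _ =>
        mul_le_mul_of_nonneg_left (ih a) (transProb_nonneg lam hnonneg S a)

lemma survP_anti {k m : ℕ} (hkm : k ≤ m) (S : Ξ) : survP lam T m S ≤ survP lam T k S := by
  induction hkm with
  | refl => exact le_refl _
  | step h ih => exact le_trans (survP_mono lam T hnonneg hD _ _) ih

lemma hitP_le_survP : ∀ n (S : Ξ), hitP lam T (n + 1) S ≤ survP lam T n S := by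
  intro n
  induction n with
  | zero =>
    intro S
    by_cases hST : S = T
    · subst hST; rw [hitP_succ_self, survP_self]
    · rw [hitP_succ lam T hST, survP_zero lam T hST]
      have h1 : ∀ a : Ξ, transProb lam S a * hitP lam T 0 a
          = if a = T then transProb lam S a else 0 := by
        intro a
        rw [hitP_zero]
        by_cases haT : a = T <;> simp [haT]
      rw [Finset.sum_congr rfl fun a _ => h1 a, Finset.sum_ite_eq' univ T]
      rw [if_pos (Finset.mem_univ T)]
      rw [← transProb_sum_one lam S (hD S)]
      exact Finset.single_le_sum (fun a _ => transProb_nonneg lam hnonneg S a) (Finset.mem_univ T)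
  | succ n ih =>
    intro S
    by_cases hST : S = T
    · subst hST; rw [hitP_succ_self, survP_self]
    · rw [hitP_succ lam T hST, survP_succ lam T hST]
      exact Finset.sum_le_sum fun a _ =>
        mul_le_mul_of_nonneg_left (ih a) (transProb_nonneg lam hnonneg S a)

lemma survP_submul {b : ℝ} (hb : 0 ≤ b) (N : ℕ) (hbN : ∀ a, survP lam T N a ≤ b) :
    ∀ m (S : Ξ), survP lam T (m + N) S ≤ b * survP lam T m S := by
  intro m
  induction m with
  | zero =>
    intro S
    by_cases hST : S = T
    · rw [hST, survP_self, survP_self, mul_zero]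
    · rw [zero_add, survP_zero lam T hST, mul_one]
      exact hbN S
  | succ m ih =>
    intro S
    by_cases hST : S = T
    · rw [hST]
      have : m + 1 + N = (m + N) + 1 := by omega
      rw [this, survP_self, survP_self, mul_zero]
    · have : m + 1 + N = (m + N) + 1 := by omega
      rw [this, survP_succ lam T hST, survP_succ lam T hST, Finset.mul_sum]
      refine Finset.sum_le_sum fun a _ => ?_
      calc transProb lam S a * survP lam T (m + N) a
          ≤ transProb lam S a * (b * survP lam T m a) :=
            mul_le_mul_of_nonneg_left (ih a) (transProb_nonneg lam hnonneg S a)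
        _ = b * (transProb lam S a * survP lam T m a) := by ring

lemma exists_survP_lt_one {S : Ξ}
    (hconn : Relation.ReflTransGen (fun x y => 0 < lam x y) S T) :
    ∃ n, survP lam T n S < 1 := by
  induction hconn using Relation.ReflTransGen.head_induction_on with
  | refl => exact ⟨0, by rw [survP_self]; norm_num⟩
  | @head a c hac hcT ih =>
    obtain ⟨n, hn⟩ := ih
    by_cases haT : a = T
    · exact ⟨0, by rw [haT, survP_self]; norm_num⟩
    · refine ⟨n + 1, ?_⟩
      rw [survP_succ lam T haT]
      have hpac : 0 < transProb lam a c := div_pos hac (hD a)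
      calc ∑ x : Ξ, transProb lam a x * survP lam T n x
          < ∑ x : Ξ, transProb lam a x := by
            refine Finset.sum_lt_sum (fun x _ => ?_) ⟨c, Finset.mem_univ c, ?_⟩
            · nlinarith [transProb_nonneg lam hnonneg a x, survP_le_one lam T hnonneg hD n x]
            · nlinarith
        _ = 1 := transProb_sum_one lam a (hD a)

end Decay

lemma survP_geom (hnonneg : ∀ a b, 0 ≤ lam a b) (hD : ∀ a : Ξ, 0 < ∑ b, lam a b)
    (hconn : ∀ a : Ξ, Relation.ReflTransGen (fun x y => 0 < lam x y) a T) :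
    ∃ C r : ℝ, 0 < C ∧ 0 < r ∧ r < 1 ∧ ∀ n (S : Ξ), survP lam T n S ≤ C * r ^ n := by
  choose g hg using fun S => exists_survP_lt_one lam T hnonneg hD (hconn S)
  set N := (univ.sup g) + 1 with hN
  have hNpos : 0 < N := Nat.succ_pos _
  have hsurvN : ∀ S : Ξ, survP lam T N S < 1 := fun S =>
    lt_of_le_of_lt (survP_anti lam T hnonneg hD
      (le_trans (Finset.le_sup (Finset.mem_univ S)) (Nat.le_succ _)) S) (hg S)
  have hne : (univ : Finset Ξ).Nonempty := ⟨T, Finset.mem_univ T⟩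
  set b := max (univ.sup' hne fun S => survP lam T N S) 2⁻¹ with hbdef
  have hb0 : (0:ℝ) < b := lt_of_lt_of_le (by norm_num) (le_max_right _ _)
  have hb1 : b < 1 := max_lt ((Finset.sup'_lt_iff hne).mpr fun S _ => hsurvN S) (by norm_num)
  have hbN : ∀ S : Ξ, survP lam T N S ≤ b := fun S =>
    le_trans (Finset.le_sup' _ (Finset.mem_univ S)) (le_max_left _ _)
  have hgeo : ∀ k (S : Ξ), survP lam T (k * N) S ≤ b ^ k := by
    intro k
    induction k with
    | zero => intro S; simpa using survP_le_one lam T hnonneg hD 0 S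
    | succ k ih =>
      intro S
      have hkn : (k + 1) * N = k * N + N := by ring
      rw [hkn, pow_succ]
      calc survP lam T (k * N + N) S ≤ b * survP lam T (k * N) S :=
            survP_submul lam T hnonneg hD hb0.le N hbN (k * N) S
        _ ≤ b ^ k * b := by nlinarith [ih S, survP_nonneg lam T hnonneg (k * N) S]
  have hdiv : ∀ n (S : Ξ), survP lam T n S ≤ b ^ (n / N) := fun n S =>
    le_trans (survP_anti lam T hnonneg hD (Nat.div_mul_le_self n N) S) (hgeo _ S)
  set r := b ^ ((N:ℝ)⁻¹) with hrdef
  have hr0 : 0 < r := Real.rpow_pos_of_pos hb0 _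
  have hr1 : r < 1 := Real.rpow_lt_one hb0.le hb1 (by positivity)
  have hrN : r ^ (N:ℕ) = b := by
    rw [hrdef, ← Real.rpow_natCast (b ^ ((N:ℝ)⁻¹)) N, ← Real.rpow_mul hb0.le,
      inv_mul_cancel₀ (by exact_mod_cast hNpos.ne'), Real.rpow_one]
  refine ⟨b⁻¹, r, inv_pos.mpr hb0, hr0, hr1, fun n S => ?_⟩
  have h1 : survP lam T n S ≤ r ^ (N * (n / N)) := by
    rw [pow_mul, hrN]
    exact hdiv n S
  by_cases hn : N ≤ n + 1
  · have hmod := Nat.div_add_mod n N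
    have hmlt := Nat.mod_lt n hNpos
    have h2 : r ^ (N * (n / N)) ≤ r ^ (n + 1 - N) :=
      pow_le_pow_of_le_one hr0.le hr1.le (by omega)
    have h3 : r ^ (n + 1 - N) = r ^ (n + 1) / r ^ (N:ℕ) := by
      rw [eq_div_iff (pow_ne_zero _ hr0.ne'), ← pow_add]
      congr 1
      omega
    have h4 : r ^ (n + 1 - N) ≤ b⁻¹ * r ^ n := by
      rw [h3, hrN, pow_succ]
      rw [div_eq_inv_mul]
      have hrn : 0 ≤ r ^ n := pow_nonneg hr0.le n
      have : r ^ n * r ≤ r ^ n := by nlinarith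
      nlinarith [inv_pos.mpr hb0]
    exact le_trans h1 (le_trans h2 h4)
  · have h5 : r ^ (N:ℕ) ≤ r ^ n := pow_le_pow_of_le_one hr0.le hr1.le (by omega)
    rw [hrN] at h5
    have h6 : (1:ℝ) ≤ b⁻¹ * r ^ n := by
      rw [← inv_mul_cancel₀ hb0.ne']
      exact mul_le_mul_of_nonneg_left h5 (inv_pos.mpr hb0).le
    exact le_trans (survP_le_one lam T hnonneg hD n S) h6

section Summ
variable (hnonneg : ∀ a b, 0 ≤ lam a b) (hD : ∀ a : Ξ, 0 < ∑ b, lam a b)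
    (hconn : ∀ a : Ξ, Relation.ReflTransGen (fun x y => 0 < lam x y) a T)
include hnonneg hD hconn

lemma hitP_geom : ∃ K r : ℝ, 0 < K ∧ 0 < r ∧ r < 1 ∧
    ∀ n (S : Ξ), hitP lam T n S ≤ K * r ^ n := by
  obtain ⟨C, r, hC, hr0, hr1, hb⟩ := survP_geom lam T hnonneg hD hconn
  refine ⟨max 1 (C * r⁻¹), r, lt_of_lt_of_le one_pos (le_max_left _ _), hr0, hr1, fun n S => ?_⟩
  cases n with
  | zero =>
    rw [hitP_zero, pow_zero, mul_one]
    split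
    · exact le_max_left _ _
    · exact le_trans zero_le_one (le_max_left _ _)
  | succ n =>
    calc hitP lam T (n + 1) S ≤ survP lam T n S := hitP_le_survP lam T hnonneg hD n S
      _ ≤ C * r ^ n := hb n S
      _ = (C * r⁻¹) * r ^ (n + 1) := by
          field_simp
          ring
      _ ≤ max 1 (C * r⁻¹) * r ^ (n + 1) :=
          mul_le_mul_of_nonneg_right (le_max_right _ _) (pow_nonneg hr0.le _)

lemma summable_hitP (S : Ξ) : Summable (fun n => hitP lam T n S) := by
  obtain ⟨K, r, hK, hr0, hr1, hb⟩ := hitP_geom lam T hnonneg hD hconn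
  exact Summable.of_nonneg_of_le (fun n => hitP_nonneg lam T hnonneg n S) (fun n => hb n S)
    ((summable_geometric_of_lt_one hr0.le hr1).mul_left K)

lemma summable_valP (S : Ξ) : Summable (fun n => valP lam f T n S) := by
  obtain ⟨K, r, hK, hr0, hr1, hb⟩ := hitP_geom lam T hnonneg hD hconn
  set M := ∑ a : Ξ, ∑ b : Ξ, |f a b| with hM
  have hM0 : 0 ≤ M := Finset.sum_nonneg fun a _ => Finset.sum_nonneg fun b _ => abs_nonneg _
  have hfM : ∀ a b : Ξ, |f a b| ≤ M := by
    intro a b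
    calc |f a b| ≤ ∑ b' : Ξ, |f a b'| :=
          Finset.single_le_sum (f := fun b' => |f a b'|) (fun b' _ => abs_nonneg _) (Finset.mem_univ b)
      _ ≤ M := Finset.single_le_sum (f := fun a' => ∑ b' : Ξ, |f a' b'|)
          (fun a' _ => Finset.sum_nonneg fun b' _ => abs_nonneg _) (Finset.mem_univ a)
  have habs : ∀ (n : ℕ) (x : Fin (n + 1) → Ξ), |pathSum f x| ≤ n * M := by
    intro n x
    calc |pathSum f x| ≤ ∑ k : Fin n, |f (x k.castSucc) (x k.succ)| :=
          Finset.abs_sum_le_sum_abs _ _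
      _ ≤ ∑ _k : Fin n, M := Finset.sum_le_sum fun k _ => hfM _ _
      _ = n * M := by simp [mul_comm]
  have hval : ∀ n S, |valP lam f T n S| ≤ n * M * hitP lam T n S := by
    intro n S
    unfold valP hitP
    calc |∑ x ∈ univ.filter (FirstHit S T (n := n)), pathProb lam x * pathSum f x|
        ≤ ∑ x ∈ univ.filter (FirstHit S T (n := n)), |pathProb lam x * pathSum f x| :=
          Finset.abs_sum_le_sum_abs _ _
      _ ≤ ∑ x ∈ univ.filter (FirstHit S T (n := n)), (n * M) * pathProb lam x := by
          refine Finset.sum_le_sum fun x _ => ?_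
          rw [abs_mul, abs_of_nonneg (pathProb_nonneg lam hnonneg x)]
          exact mul_le_mul_of_nonneg_left (habs n x) (pathProb_nonneg lam hnonneg x)
            |>.trans_eq (by ring)
      _ = (n * M) * ∑ x ∈ univ.filter (FirstHit S T (n := n)), pathProb lam x :=
          (Finset.mul_sum _ _ _).symm
  refine Summable.of_norm_bounded (g := fun n => (M * K) * ((n:ℝ) ^ 1 * r ^ n))
    ((summable_pow_mul_geometric_of_norm_lt_one (R := ℝ) 1 (by rwa [Real.norm_eq_abs, abs_of_nonneg hr0.le])).mul_left _)
    (fun n => ?_)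
  rw [Real.norm_eq_abs]
  calc |valP lam f T n S| ≤ n * M * hitP lam T n S := hval n S
    _ ≤ n * M * (K * r ^ n) := by
        refine mul_le_mul_of_nonneg_left (hb n S) ?_
        positivity
    _ = (M * K) * ((n:ℝ) ^ 1 * r ^ n) := by ring

lemma tsum_hitP_eq_one (S : Ξ) : ∑' n, hitP lam T n S = 1 := by
  obtain ⟨C, r, hC, hr0, hr1, hb⟩ := survP_geom lam T hnonneg hD hconn
  have hsum := summable_hitP lam T hnonneg hD hconn S
  refine HasSum.tsum_eq ?_
  rw [hsum.hasSum_iff_tendsto_nat]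
  have hsurv : Filter.Tendsto (fun n => survP lam T n S) Filter.atTop (nhds 0) :=
    squeeze_zero (fun n => survP_nonneg lam T hnonneg n S) (fun n => hb n S)
      (by simpa using (tendsto_pow_atTop_nhds_zero_of_lt_one hr0.le hr1).const_mul C)
  have h1 : Filter.Tendsto (fun n => ∑ i ∈ Finset.range (n + 1), hitP lam T i S)
      Filter.atTop (nhds 1) := by
    have h2 : ∀ n, ∑ i ∈ Finset.range (n + 1), hitP lam T i S = 1 - survP lam T n S := by
      intro n
      have := hit_surv_total lam T hnonneg hD n S
      linarith
    simp only [h2]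
    simpa using (tendsto_const_nhds (x := (1:ℝ))).sub hsurv
  exact (Filter.tendsto_add_atTop_iff_nat 1).mp h1

end Summ

def ExcCond (T : Ξ) {n : ℕ} (x : Fin (n + 1) → Ξ) : Prop :=
  x 0 = T ∧ x (Fin.last n) = T ∧ ∀ m : Fin (n + 1), m ≠ 0 → m ≠ Fin.last n → x m ≠ T

instance (T : Ξ) (n : ℕ) : DecidablePred (ExcCond T (n := n)) := fun _ => by
  unfold ExcCond; infer_instance

lemma excCond_rev_aux (T : Ξ) {n : ℕ} (x : Fin (n + 1) → Ξ) (h : ExcCond T x) :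
    ExcCond T (x ∘ Fin.rev) := by
  obtain ⟨h0, hl, hm⟩ := h
  refine ⟨by simpa [Fin.rev_zero] using hl, by simpa [Fin.rev_last] using h0, fun m hm0 hml => ?_⟩
  have h1 : m.rev ≠ 0 := by
    intro hc
    apply hml
    have := congrArg Fin.rev hc
    rwa [Fin.rev_rev, Fin.rev_zero] at this
  have h2 : m.rev ≠ Fin.last n := by
    intro hc
    apply hm0
    have := congrArg Fin.rev hc
    rwa [Fin.rev_rev, Fin.rev_last] at this
  exact hm m.rev h1 h2

lemma excCond_rev (T : Ξ) {n : ℕ} (x : Fin (n + 1) → Ξ) :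
    ExcCond T (x ∘ Fin.rev) ↔ ExcCond T x := by
  constructor
  · intro h
    have := excCond_rev_aux T _ h
    have hx : (x ∘ Fin.rev) ∘ Fin.rev = x := by
      funext k; simp [Function.comp, Fin.rev_rev]
    rwa [hx] at this
  · exact excCond_rev_aux T x

lemma pathSum_rev (hf : ∀ a b, f b a = -f a b) {n : ℕ} (x : Fin (n + 1) → Ξ) :
    pathSum f (x ∘ Fin.rev) = - pathSum f x := by
  unfold pathSum
  have h1 : ∀ k : Fin n, f ((x ∘ Fin.rev) k.castSucc) ((x ∘ Fin.rev) k.succ)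
      = f (x k.rev.succ) (x k.rev.castSucc) := by
    intro k
    simp [Function.comp, Fin.rev_castSucc, Fin.rev_succ]
  rw [Finset.sum_congr rfl fun k _ => h1 k]
  have h3 : ∑ k : Fin n, f (x k.rev.succ) (x k.rev.castSucc)
      = ∑ k : Fin n, f (x k.succ) (x k.castSucc) :=
    Fintype.sum_equiv Fin.revPerm _ _ (fun k => rfl)
  rw [h3, Finset.sum_congr rfl fun (k : Fin n) _ => hf (x k.castSucc) (x k.succ)]
  exact Finset.sum_neg_distrib _

lemma pathProb_rev (hsymm : ∀ a b, lam a b = lam b a) {n : ℕ} (x : Fin (n + 1) → Ξ)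
    (hx : x 0 = x (Fin.last n)) :
    pathProb lam (x ∘ Fin.rev) = pathProb lam x := by
  unfold pathProb
  have h1 : ∀ k : Fin n, transProb lam ((x ∘ Fin.rev) k.castSucc) ((x ∘ Fin.rev) k.succ)
      = (fun j : Fin n => transProb lam (x j.succ) (x j.castSucc)) k.rev := by
    intro k
    simp [Function.comp, Fin.rev_castSucc, Fin.rev_succ]
  rw [Finset.prod_congr rfl fun k _ => h1 k]
  have h1' : ∏ k : Fin n, (fun j : Fin n => transProb lam (x j.succ) (x j.castSucc)) k.rev
      = ∏ k : Fin n, transProb lam (x k.succ) (x k.castSucc) :=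
    Fintype.prod_equiv Fin.revPerm _ _ (fun k => rfl)
  rw [h1']
  -- now : ∏ k, transProb lam (x k.succ) (x k.castSucc) = ∏ k, transProb lam (x k.castSucc) (x k.succ)
  cases n with
  | zero => simp
  | succ n' =>
    by_cases hz : ∀ m : Fin (n' + 2), (∑ b, lam (x m) b) ≠ 0
    · have hD : ∀ k : Fin (n' + 1), transProb lam (x k.succ) (x k.castSucc)
          = lam (x k.castSucc) (x k.succ) / (∑ b, lam (x k.succ) b) := by
        intro k
        unfold transProb
        rw [hsymm]
      have hD' : ∀ k : Fin (n' + 1), transProb lam (x k.castSucc) (x k.succ)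
          = lam (x k.castSucc) (x k.succ) / (∑ b, lam (x k.castSucc) b) := fun k => rfl
      rw [Finset.prod_congr rfl fun k _ => hD k, Finset.prod_congr rfl fun k _ => hD' k,
        Finset.prod_div_distrib, Finset.prod_div_distrib]
      congr 1
      have e1 : ∏ m : Fin (n' + 2), (∑ b, lam (x m) b)
          = (∑ b, lam (x 0) b) * ∏ k : Fin (n' + 1), (∑ b, lam (x k.succ) b) :=
        Fin.prod_univ_succ _
      have e2 : ∏ m : Fin (n' + 2), (∑ b, lam (x m) b)
          = (∏ k : Fin (n' + 1), (∑ b, lam (x k.castSucc) b)) * (∑ b, lam (x (Fin.last (n' + 1))) b) :=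
        Fin.prod_univ_castSucc _
      rw [e1] at e2
      rw [← hx] at e2
      have h0 : (∑ b, lam (x 0) b) ≠ 0 := hz 0
      exact mul_left_cancel₀ h0 (e2.trans (mul_comm _ _))
    · push_neg at hz
      obtain ⟨m, hm⟩ := hz
      have hLHS : ∏ k : Fin (n' + 1), transProb lam (x k.succ) (x k.castSucc) = 0 := by
        by_cases hm0 : m = 0
        · refine Finset.prod_eq_zero (Finset.mem_univ (Fin.last n')) ?_
          have hxl : x (Fin.last n').succ = x m := by rw [Fin.succ_last, ← hx, hm0]
          unfold transProb
          rw [hxl, hm, div_zero]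
        · obtain ⟨j, hj⟩ := Fin.eq_succ_of_ne_zero hm0
          refine Finset.prod_eq_zero (Finset.mem_univ j) ?_
          unfold transProb
          rw [← hj, hm, div_zero]
      have hRHS : ∏ k : Fin (n' + 1), transProb lam (x k.castSucc) (x k.succ) = 0 := by
        by_cases hml : m = Fin.last (n' + 1)
        · refine Finset.prod_eq_zero (Finset.mem_univ 0) ?_
          unfold transProb
          have h0 : x (Fin.castSucc (0 : Fin (n' + 1))) = x m := by
            rw [Fin.castSucc_zero, hx, ← hml]
          rw [h0, hm, div_zero]
        · obtain ⟨j, hj⟩ := Fin.exists_castSucc_eq.mpr hml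
          refine Finset.prod_eq_zero (Finset.mem_univ j) ?_
          unfold transProb
          rw [hj, hm, div_zero]
      rw [hLHS, hRHS]

lemma excCond_cons {n : ℕ} (a : Ξ) (y : Fin (n + 1) → Ξ) :
    ExcCond T (Fin.cons a y : Fin (n + 2) → Ξ) ↔ a = T ∧ FirstHit (y 0) T y := by
  unfold ExcCond FirstHit
  constructor
  · rintro ⟨h0, hl, hm⟩
    refine ⟨by simpa using h0, rfl, by simpa [← Fin.succ_last] using hl, fun k => ?_⟩
    have h1 : (k.castSucc.succ : Fin (n + 2)) ≠ 0 := Fin.succ_ne_zero _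
    have h2 : (k.castSucc.succ : Fin (n + 2)) ≠ Fin.last (n + 1) := by
      rw [← Fin.succ_last]
      intro hc
      exact (Fin.castSucc_lt_last k).ne (Fin.succ_injective _ hc)
    have := hm _ h1 h2
    rwa [Fin.cons_succ] at this
  · rintro ⟨haT, -, hl, hc⟩
    refine ⟨by simpa using haT, by simpa [← Fin.succ_last] using hl, fun m hm0 hml => ?_⟩
    obtain ⟨j, rfl⟩ := Fin.eq_succ_of_ne_zero hm0
    rw [Fin.cons_succ]
    have hj : j ≠ Fin.last n := by
      intro hcj
      apply hml
      rw [hcj, Fin.succ_last]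
    obtain ⟨k, rfl⟩ := Fin.exists_castSucc_eq.mpr hj
    exact hc k

lemma exc_n (hsymm : ∀ a b, lam a b = lam b a) (hf : ∀ a b, f b a = -f a b) (n : ℕ) :
    ∑ a : Ξ, transProb lam T a * (f T a * hitP lam T n a + valP lam f T n a) = 0 := by
  classical
  set G : (Fin (n + 2) → Ξ) → ℝ :=
    fun x => if ExcCond T x then pathProb lam x * pathSum f x else 0 with hG
  have hdec : ∑ x : Fin (n + 2) → Ξ, G x
      = ∑ a : Ξ, transProb lam T a * (f T a * hitP lam T n a + valP lam f T n a) := by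
    rw [sum_paths_cons]
    have h1 : ∀ (a : Ξ) (y : Fin (n + 1) → Ξ), G (Fin.cons a y)
        = if a = T then (if FirstHit (y 0) T y then
            (transProb lam T (y 0) * pathProb lam y) * (f T (y 0) + pathSum f y) else 0) else 0 := by
      intro a y
      show (if ExcCond T (Fin.cons a y : Fin (n + 2) → Ξ) then
            pathProb lam (Fin.cons a y) * pathSum f (Fin.cons a y) else 0)
          = if a = T then (if FirstHit (y 0) T y then
              (transProb lam T (y 0) * pathProb lam y) * (f T (y 0) + pathSum f y) else 0) else 0
      by_cases haT : a = T
      · by_cases hFH : FirstHit (y 0) T y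
        · rw [if_pos ((excCond_cons T a y).mpr ⟨haT, hFH⟩), if_pos haT, if_pos hFH,
            pathProb_cons, pathSum_cons, haT]
        · rw [if_neg (fun h => hFH ((excCond_cons T a y).mp h).2), if_pos haT, if_neg hFH]
      · rw [if_neg (fun h => haT ((excCond_cons T a y).mp h).1), if_neg haT]
    simp only [h1]
    rw [Finset.sum_comm]
    have h2 : ∀ y : Fin (n + 1) → Ξ, (∑ a : Ξ, if a = T then
        (if FirstHit (y 0) T y then
          (transProb lam T (y 0) * pathProb lam y) * (f T (y 0) + pathSum f y) else 0) else 0)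
        = if FirstHit (y 0) T y then
            (transProb lam T (y 0) * pathProb lam y) * (f T (y 0) + pathSum f y) else 0 := by
      intro y
      rw [Finset.sum_ite_eq' univ T]
      simp
    simp only [h2]
    exact inner_step lam f T T n
  have hb : Function.Bijective (fun x : Fin (n + 2) → Ξ => x ∘ Fin.rev) :=
    Function.Involutive.bijective (fun x => by funext k; simp [Function.comp, Fin.rev_rev])
  have h3 : ∑ x : Fin (n + 2) → Ξ, G (x ∘ Fin.rev) = ∑ x : Fin (n + 2) → Ξ, G x :=
    Fintype.sum_bijective _ hb _ _ (fun x => rfl)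
  have h4 : ∑ x : Fin (n + 2) → Ξ, G (x ∘ Fin.rev) = - ∑ x : Fin (n + 2) → Ξ, G x := by
    rw [← Finset.sum_neg_distrib]
    refine Finset.sum_congr rfl fun x _ => ?_
    show (if ExcCond T (x ∘ Fin.rev) then pathProb lam (x ∘ Fin.rev) * pathSum f (x ∘ Fin.rev) else 0)
        = -(if ExcCond T x then pathProb lam x * pathSum f x else 0)
    by_cases hE : ExcCond T x
    · have hE' : ExcCond T (x ∘ Fin.rev) := (excCond_rev T x).mpr hE
      rw [if_pos hE', if_pos hE, pathProb_rev lam hsymm x (hE.1.trans hE.2.1.symm),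
        pathSum_rev f hf x]
      ring
    · rw [if_neg (fun h => hE ((excCond_rev T x).mp h)), if_neg hE, neg_zero]
  have h5 : ∑ x : Fin (n + 2) → Ξ, G x = 0 := by
    rw [h3] at h4
    linarith
  rw [← hdec, h5]

lemma pathValue_eq_tsum (S : Ξ) : pathValue lam f S T = ∑' n, valP lam f T n S := rfl

lemma pathValue_self_eq : pathValue lam f T T = 0 := by
  rw [pathValue_eq_tsum, tsum_congr (fun n => valP_self lam f T n), tsum_zero]

section TsumLevel
variable (hnonneg : ∀ a b, 0 ≤ lam a b) (hD : ∀ a : Ξ, 0 < ∑ b, lam a b)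
    (hconn : ∀ a : Ξ, Relation.ReflTransGen (fun x y => 0 < lam x y) a T)
include hnonneg hD hconn

lemma firstStep {S : Ξ} (hST : S ≠ T) :
    pathValue lam f S T = ∑ a : Ξ, transProb lam S a * (f S a + pathValue lam f a T) := by
  have hsv : ∀ a : Ξ, Summable (fun n => valP lam f T n a) :=
    summable_valP lam f T hnonneg hD hconn
  have hsh : ∀ a : Ξ, Summable (fun n => hitP lam T n a) :=
    summable_hitP lam T hnonneg hD hconn
  have h0 : pathValue lam f S T = ∑' n, valP lam f T (n + 1) S := by
    rw [pathValue_eq_tsum, Summable.tsum_eq_zero_add (hsv S), valP_zero, zero_add]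
  rw [h0, tsum_congr (fun n => valP_succ lam f T hST n),
    Summable.tsum_finsetSum (fun a _ => (((hsh a).mul_left (f S a)).add (hsv a)).mul_left _)]
  refine Finset.sum_congr rfl fun a _ => ?_
  rw [tsum_mul_left, Summable.tsum_add ((hsh a).mul_left (f S a)) (hsv a), tsum_mul_left,
    tsum_hitP_eq_one lam T hnonneg hD hconn a, mul_one, pathValue_eq_tsum]

lemma excStep (hsymm : ∀ a b, lam a b = lam b a) (hf : ∀ a b, f b a = -f a b) :
    ∑ a : Ξ, transProb lam T a * (f T a + pathValue lam f a T) = 0 := by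
  have hsv : ∀ a : Ξ, Summable (fun n => valP lam f T n a) :=
    summable_valP lam f T hnonneg hD hconn
  have hsh : ∀ a : Ξ, Summable (fun n => hitP lam T n a) :=
    summable_hitP lam T hnonneg hD hconn
  have per_a : ∀ a : Ξ, transProb lam T a * (f T a + pathValue lam f a T)
      = ∑' n, transProb lam T a * (f T a * hitP lam T n a + valP lam f T n a) := by
    intro a
    rw [tsum_mul_left, Summable.tsum_add ((hsh a).mul_left (f T a)) (hsv a), tsum_mul_left,
      tsum_hitP_eq_one lam T hnonneg hD hconn a, mul_one, pathValue_eq_tsum]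
  rw [Finset.sum_congr rfl (fun a _ => per_a a),
    ← Summable.tsum_finsetSum (fun a _ => (((hsh a).mul_left (f T a)).add (hsv a)).mul_left _),
    tsum_congr (fun n => exc_n lam f T hsymm hf n), tsum_zero]

end TsumLevel

lemma harmonic_const (hnonneg : ∀ a b, 0 ≤ lam a b) (hD : ∀ a : Ξ, 0 < ∑ b, lam a b)
    (hconn : ∀ a b : Ξ, Relation.ReflTransGen (fun x y => 0 < lam x y) a b)
    (u : Ξ → ℝ) (hu : ∀ X : Ξ, u X = ∑ a : Ξ, transProb lam X a * u a) :
    ∀ X Y : Ξ, u X = u Y := by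
  -- maximum principle
  have hmax : ∀ X0 : Ξ, (∀ a : Ξ, u a ≤ u X0) → ∀ Y : Ξ, u Y = u X0 := by
    intro X0 hX0 Y
    have step : ∀ b c : Ξ, u b = u X0 → 0 < lam b c → u c = u X0 := by
      intro b c hb hbc
      have h1 : ∑ a : Ξ, transProb lam b a * (u X0 - u a) = 0 := by
        have h2 : ∑ a : Ξ, transProb lam b a * (u X0 - u a)
            = (∑ a : Ξ, transProb lam b a) * u X0 - ∑ a : Ξ, transProb lam b a * u a := by
          rw [Finset.sum_congr rfl fun (a : Ξ) _ => mul_sub (transProb lam b a) (u X0) (u a),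
            Finset.sum_sub_distrib, ← Finset.sum_mul]
        rw [h2, transProb_sum_one lam b (hD b), one_mul, ← hu b, hb, sub_self]
      have h3 : ∀ a ∈ (univ : Finset Ξ), 0 ≤ transProb lam b a * (u X0 - u a) := by
        intro a _
        have := transProb_nonneg lam hnonneg b a
        have := hX0 a
        nlinarith
      have h4 := (Finset.sum_eq_zero_iff_of_nonneg h3).mp h1 c (Finset.mem_univ c)
      have hpbc : 0 < transProb lam b c := div_pos hbc (hD b)
      have h5 : u X0 - u c = 0 := by
        by_contra hne
        exact hne (by nlinarith [mul_eq_zero.mp h4])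
      linarith [hX0 c]
    have hpath := hconn X0 Y
    induction hpath with
    | refl => rfl
    | tail hXb hbc ih => exact step _ _ ih hbc
  intro X Y
  obtain ⟨X0, -, hX0⟩ := Finset.exists_max_image (univ : Finset Ξ) u ⟨X, Finset.mem_univ X⟩
  rw [hmax X0 (fun a => hX0 a (Finset.mem_univ a)) X, hmax X0 (fun a => hX0 a (Finset.mem_univ a)) Y]

end Aux

/-- Transition (cocycle) formula for the path-integral value: for the canonical
Markov chain on a finite connected weighted graph, any antisymmetric edge flow
`f` and any states `S, T, U`, one has `V_f^U(T) − V_f^U(S) = V_f^S(T)`. -/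
theorem stmt_11 [Fintype Ξ] [DecidableEq Ξ]
    (lam : Ξ → Ξ → ℝ) (hsymm : ∀ a b, lam a b = lam b a)
    (hnonneg : ∀ a b, 0 ≤ lam a b) (hirrefl : ∀ a, lam a a = 0)
    (hconn : ∀ a b : Ξ, Relation.ReflTransGen (fun x y => 0 < lam x y) a b)
    (f : Ξ → Ξ → ℝ) (hf : ∀ a b, f b a = -f a b) :
    ∀ S T U : Ξ, pathValue lam f U T - pathValue lam f U S
      = pathValue lam f S T := by
  intro S T U
  by_cases htriv : ∀ a b : Ξ, a = b
  · have hz : ∀ A B : Ξ, pathValue lam f A B = 0 := by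
      intro A B
      rw [pathValue_eq_tsum lam f B A]
      have hv : ∀ n, valP lam f B n A = 0 := by
        intro n
        refine Finset.sum_eq_zero fun x _ => ?_
        have hps : pathSum f x = 0 := by
          refine Finset.sum_eq_zero fun k _ => ?_
          rw [htriv (x k.castSucc) (x k.succ)]
          have h2 := hf (x k.succ) (x k.succ)
          linarith
        rw [hps, mul_zero]
      rw [tsum_congr hv, tsum_zero]
    rw [hz, hz, hz]
    ring
  · push_neg at htriv
    obtain ⟨a0, b0, hab⟩ := htriv
    have hD : ∀ a : Ξ, 0 < ∑ b, lam a b := by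
      intro a
      have hne : ∃ c : Ξ, c ≠ a := by
        by_cases h : a = a0
        · exact ⟨b0, fun hc => hab (by rw [← h, ← hc])⟩
        · exact ⟨a0, fun hc => h hc.symm⟩
      obtain ⟨c, hca⟩ := hne
      rcases Relation.ReflTransGen.cases_head (hconn a c) with heq | ⟨b, hb, -⟩
      · exact absurd heq.symm hca
      · calc (0:ℝ) < lam a b := hb
          _ ≤ ∑ b', lam a b' :=
            Finset.single_le_sum (fun c' _ => hnonneg a c') (Finset.mem_univ b)
    by_cases hST : S = T
    · subst hST
      rw [sub_self, pathValue_self_eq lam f S]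
    · have hTS : T ≠ S := fun h => hST h.symm
      have hdiff : ∀ (X : Ξ) (A B : Ξ → ℝ),
          (∑ a : Ξ, transProb lam X a * (f X a + A a))
            - (∑ a : Ξ, transProb lam X a * (f X a + B a))
          = ∑ a : Ξ, transProb lam X a * (A a - B a) := by
        intro X A B
        rw [← Finset.sum_sub_distrib]
        exact Finset.sum_congr rfl fun a _ => by ring
      have hVT : ∀ {X : Ξ}, X ≠ T → pathValue lam f X T
          = ∑ a : Ξ, transProb lam X a * (f X a + pathValue lam f a T) :=
        fun h => firstStep lam f T hnonneg hD (fun a => hconn a T) h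
      have hVS : ∀ {X : Ξ}, X ≠ S → pathValue lam f X S
          = ∑ a : Ξ, transProb lam X a * (f X a + pathValue lam f a S) :=
        fun h => firstStep lam f S hnonneg hD (fun a => hconn a S) h
      have hharm : ∀ X : Ξ, (pathValue lam f X T - pathValue lam f X S)
          = ∑ a : Ξ, transProb lam X a * (pathValue lam f a T - pathValue lam f a S) := by
        intro X
        by_cases hXT : X = T
        · subst hXT
          have hexc := excStep lam f X hnonneg hD (fun a => hconn a X) hsymm hf
          calc pathValue lam f X X - pathValue lam f X S
              = (∑ a : Ξ, transProb lam X a * (f X a + pathValue lam f a X))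
                - (∑ a : Ξ, transProb lam X a * (f X a + pathValue lam f a S)) := by
                rw [hexc, pathValue_self_eq lam f X, ← hVS hTS]
            _ = ∑ a : Ξ, transProb lam X a * (pathValue lam f a X - pathValue lam f a S) :=
                hdiff X _ _
        · by_cases hXS : X = S
          · subst hXS
            have hexc := excStep lam f X hnonneg hD (fun a => hconn a X) hsymm hf
            calc pathValue lam f X T - pathValue lam f X X
                = (∑ a : Ξ, transProb lam X a * (f X a + pathValue lam f a T))
                  - (∑ a : Ξ, transProb lam X a * (f X a + pathValue lam f a X)) := by
                  rw [hexc, pathValue_self_eq lam f X, ← hVT hST]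
              _ = ∑ a : Ξ, transProb lam X a * (pathValue lam f a T - pathValue lam f a X) :=
                  hdiff X _ _
          · calc pathValue lam f X T - pathValue lam f X S
                = (∑ a : Ξ, transProb lam X a * (f X a + pathValue lam f a T))
                  - (∑ a : Ξ, transProb lam X a * (f X a + pathValue lam f a S)) := by
                  rw [← hVT hXT, ← hVS hXS]
              _ = ∑ a : Ξ, transProb lam X a * (pathValue lam f a T - pathValue lam f a S) :=
                  hdiff X _ _
      have hconst := harmonic_const lam hnonneg hD hconn
        (fun X => pathValue lam f X T - pathValue lam f X S) hharm U S
      calc pathValue lam f U T - pathValue lam f U S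
          = pathValue lam f S T - pathValue lam f S S := hconst
        _ = pathValue lam f S T := by rw [pathValue_self_eq lam f S, sub_zero]
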